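/- For a singleton K = {h}, the φ-spectrum of K equals ℕ if and only if h belongs to the stable image of φ and h is not a periodic point of φ, assuming that the spectrum of any periodic point is finite (e.g. the restriction of φ to some Im(φ^k) is injective and periods are bounded). -/

import Mathlib

noncomputable def phiOrd {G : Type*} (f : G → G) (K : Set G) (g : G) : ℕ∞ :=
  sInf ((fun k : ℕ => (k : ℕ∞)) '' {k : ℕ | f^[k] g ∈ K})

lemma phiOrd_singleton_eq {G : Type*} (f : G → G) (h x : G) (n : ℕ) :
    phiOrd f {h} x = (n : ℕ∞) ↔ f^[n] x = h ∧ ∀ i < n, f^[i] x ≠ h := by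
  unfold phiOrd
  set S : Set ℕ := {k : ℕ | f^[k] x ∈ ({h} : Set G)} with hSdef
  have hfun : (fun k : ℕ => (k : ℕ∞)) = WithTop.some := by
    funext a; rfl
  rw [hfun]
  constructor
  · intro heq
    have hS : S.Nonempty := by
      by_contra hne
      rw [Set.not_nonempty_iff_eq_empty] at hne
      rw [hne] at heq
      erw [Set.image_empty] at heq
      simp at heq
    erw [← WithTop.coe_sInf' hS (OrderBot.bddBelow S)] at heq
    rw [congrFun hfun n] at heq
    have h1 : sInf S = n := WithTop.coe_inj.mp heq
    have h2 : n ∈ S := h1 ▸ Nat.sInf_mem hS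
    refine ⟨h2, fun i hi => ?_⟩
    have := Nat.notMem_of_lt_sInf (s := S) (by omega : i < sInf S)
    simpa [hSdef] using this
  · rintro ⟨h1, h2⟩
    have hmem : n ∈ S := h1
    have hS : S.Nonempty := ⟨n, hmem⟩
    erw [← WithTop.coe_sInf' hS (OrderBot.bddBelow S)]
    have : sInf S = n := by
      apply le_antisymm (Nat.sInf_le hmem)
      refine le_csInf hS fun b hb => ?_
      by_contra hlt
      exact h2 b (by omega) hb
    rw [congrFun hfun n]
    exact congrArg _ this

theorem stmt8 {G : Type*} [Group G] (φ : G →* G) (h : G) (p k : ℕ)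
    (hp : ∀ x : G, (∃ n : ℕ, 1 ≤ n ∧ (⇑φ)^[n] x = x) →
      ∃ n : ℕ, 1 ≤ n ∧ n ≤ p ∧ (⇑φ)^[n] x = x)
    (hinj : Set.InjOn ⇑φ (Set.range ((⇑φ)^[k]))) :
    {n : ℕ | ∃ x : G, phiOrd ⇑φ {h} x = (n : ℕ∞)} = Set.univ ↔
      (∀ i : ℕ, 1 ≤ i → h ∈ Set.range ((⇑φ)^[i])) ∧
        ¬ ∃ n : ℕ, 1 ≤ n ∧ (⇑φ)^[n] h = h := by
  -- range φ^[k] is closed under iterates of φ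
  have hclosed : ∀ (m : ℕ) (a : G), a ∈ Set.range ((⇑φ)^[k]) →
      (⇑φ)^[m] a ∈ Set.range ((⇑φ)^[k]) := by
    rintro m a ⟨c, rfl⟩
    exact ⟨(⇑φ)^[m] c, by
      rw [← Function.iterate_add_apply, ← Function.iterate_add_apply, Nat.add_comm]⟩
  -- φ^[m] is injective on range φ^[k]
  have hinjm : ∀ (m : ℕ) (a b : G), a ∈ Set.range ((⇑φ)^[k]) → b ∈ Set.range ((⇑φ)^[k]) →
      (⇑φ)^[m] a = (⇑φ)^[m] b → a = b := by
    intro m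
    induction m with
    | zero => intro a b _ _ hab; simpa using hab
    | succ m ih =>
      intro a b ha hb hab
      rw [Function.iterate_succ_apply', Function.iterate_succ_apply'] at hab
      exact ih a b ha hb (hinj (hclosed m a ha) (hclosed m b hb) hab)
  constructor
  · intro huniv
    have hall : ∀ n : ℕ, ∃ x : G, (⇑φ)^[n] x = h ∧ ∀ i < n, (⇑φ)^[i] x ≠ h := by
      intro n
      have : n ∈ {n : ℕ | ∃ x : G, phiOrd ⇑φ {h} x = (n : ℕ∞)} := huniv ▸ Set.mem_univ n
      obtain ⟨x, hx⟩ := this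
      exact ⟨x, (phiOrd_singleton_eq _ _ _ _).mp hx⟩
    constructor
    · intro i _
      obtain ⟨x, hx, _⟩ := hall i
      exact ⟨x, hx⟩
    · rintro hper
      obtain ⟨m, hm1, hmp, hmfix⟩ := hp h hper
      obtain ⟨x, hx, hmin⟩ := hall (k + m)
      -- h ∈ range φ^[k]
      have hhk : h ∈ Set.range ((⇑φ)^[k]) := by
        obtain ⟨m', rfl⟩ : ∃ m', m = m' + 1 := ⟨m - 1, by omega⟩
        have hfix2 : ((⇑φ)^[k])^[m' + 1] h = h := by
          rw [← Function.iterate_mul]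
          have : ((⇑φ)^[m' + 1])^[k] h = h := Function.iterate_fixed hmfix k
          rwa [← Function.iterate_mul, Nat.mul_comm] at this
        exact ⟨((⇑φ)^[k])^[m'] h, by
          rw [← Function.iterate_succ_apply' ((⇑φ)^[k])]; exact hfix2⟩
      -- φ^[m] (φ^[k] x) = h = φ^[m] h
      have key : (⇑φ)^[m] ((⇑φ)^[k] x) = (⇑φ)^[m] h := by
        rw [← Function.iterate_add_apply, Nat.add_comm, hx, hmfix]
      have := hinjm m ((⇑φ)^[k] x) h ⟨x, rfl⟩ hhk key
      exact hmin k (by omega) this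
  · rintro ⟨hst, hnper⟩
    ext n
    simp only [Set.mem_setOf_eq, Set.mem_univ, iff_true]
    rcases Nat.eq_zero_or_pos n with rfl | hn
    · exact ⟨h, (phiOrd_singleton_eq _ _ _ _).mpr ⟨rfl, by omega⟩⟩
    · obtain ⟨x, hx⟩ := hst n hn
      refine ⟨x, (phiOrd_singleton_eq _ _ _ _).mpr ⟨hx, fun i hi hxi => ?_⟩⟩
      apply hnper
      refine ⟨n - i, by omega, ?_⟩
      have : (⇑φ)^[n - i] ((⇑φ)^[i] x) = h := by
        rw [← Function.iterate_add_apply]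
        rw [show n - i + i = n by omega]
        exact hx
      rwa [hxi] at this
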